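/- arXiv:1304.0181 — 4 statements merged into one kernel-verified Lean document; each statement's English description precedes it below -/
import Mathlib

section
/- On the projective line over a ring R, the point R(1,0) is radically parallel to a point q if and only if q = R(1,b) for some b in the Jacobson radical of R. Here a point p is radically parallel to q if every point distant to p is also distant to q. -/
open Matrix

/-- A pair `(a, b)` is admissible if it is the first row of an invertible 2×2 matrix. -/
def Admissible {R : Type*} [Ring R] (a b : R) : Prop :=
  ∃ M : Matrix (Fin 2) (Fin 2) R, IsUnit M ∧ M 0 0 = a ∧ M 0 1 = b

/-- The point `R(a,b)` of the projective line over `R`. -/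
def pt (R : Type*) [Ring R] (a b : R) : Submodule R (Fin 2 → R) :=
  Submodule.span R {![a, b]}

/-- The projective line over `R`. -/
def ProjLine (R : Type*) [Ring R] : Set (Submodule R (Fin 2 → R)) :=
  {p | ∃ a b : R, Admissible a b ∧ p = pt R a b}

/-- Two points are distant iff representing admissible pairs form an invertible matrix. -/
def Distant {R : Type*} [Ring R] (p q : Submodule R (Fin 2 → R)) : Prop :=
  ∃ a b c d : R, p = pt R a b ∧ q = pt R c d ∧ IsUnit (!![a, b; c, d])

/-- `p` is radically parallel to `q`: every point distant to `p` is distant to `q`. -/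
def RadParallel {R : Type*} [Ring R] (p q : Submodule R (Fin 2 → R)) : Prop :=
  ∀ x ∈ ProjLine R, Distant x p → Distant x q

section Aux
variable {R : Type*} [Ring R]


private lemma isUnit_of_mul_eq_one_both {M N : Matrix (Fin 2) (Fin 2) R}
    (h1 : M * N = 1) (h2 : N * M = 1) : IsUnit M := ⟨⟨M, N, h1, h2⟩, rfl⟩

private lemma swap_unit : IsUnit (!![(0:R),1;1,0]) := by
  apply isUnit_of_mul_eq_one_both (N := !![(0:R),1;1,0]) <;>
    simp [Matrix.mul_fin_two, Matrix.one_fin_two]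

/-- If `!![a,e;0,1]` is a unit then so is `a`. -/
private lemma isUnit_a_of {a e : R} (h : IsUnit (!![a,e;0,1])) : IsUnit a := by
  obtain ⟨u, hu⟩ := h
  have hMN : !![a,e;0,1] * (u⁻¹ : (Matrix (Fin 2) (Fin 2) R)ˣ).val = 1 := by
    rw [← hu]; exact u.mul_inv
  have hNM : (u⁻¹ : (Matrix (Fin 2) (Fin 2) R)ˣ).val * !![a,e;0,1] = 1 := by
    rw [← hu]; exact u.inv_mul
  set N := (u⁻¹ : (Matrix (Fin 2) (Fin 2) R)ˣ).val with hN
  have h10 : N 1 0 = 0 := by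
    have := congrFun (congrFun hMN 1) 0
    simpa [Matrix.mul_apply, Fin.sum_univ_two, Matrix.one_apply] using this
  have h00 : a * N 0 0 = 1 := by
    have := congrFun (congrFun hMN 0) 0
    simpa [Matrix.mul_apply, Fin.sum_univ_two, Matrix.one_apply, h10] using this
  have h00' : N 0 0 * a = 1 := by
    have := congrFun (congrFun hNM 0) 0
    simpa [Matrix.mul_apply, Fin.sum_univ_two, Matrix.one_apply] using this
  exact ⟨⟨a, N 0 0, h00, h00'⟩, rfl⟩

/-- If `!![1,e;0,c]` is a unit then so is `c`. -/
private lemma isUnit_d_of {c e : R} (h : IsUnit (!![1,e;0,c])) : IsUnit c := by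
  obtain ⟨u, hu⟩ := h
  have hMN : !![1,e;0,c] * (u⁻¹ : (Matrix (Fin 2) (Fin 2) R)ˣ).val = 1 := by
    rw [← hu]; exact u.mul_inv
  have hNM : (u⁻¹ : (Matrix (Fin 2) (Fin 2) R)ˣ).val * !![1,e;0,c] = 1 := by
    rw [← hu]; exact u.inv_mul
  set N := (u⁻¹ : (Matrix (Fin 2) (Fin 2) R)ˣ).val with hN
  have h10 : N 1 0 = 0 := by
    have := congrFun (congrFun hNM 1) 0
    simpa [Matrix.mul_apply, Fin.sum_univ_two, Matrix.one_apply] using this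
  have h11 : N 1 1 * c = 1 := by
    have := congrFun (congrFun hNM 1) 1
    simpa [Matrix.mul_apply, Fin.sum_univ_two, Matrix.one_apply, h10] using this
  have h11' : c * N 1 1 = 1 := by
    have := congrFun (congrFun hMN 1) 1
    simpa [Matrix.mul_apply, Fin.sum_univ_two, Matrix.one_apply] using this
  exact ⟨⟨c, N 1 1, h11', h11⟩, rfl⟩

/-- `!![1,e;0,u]` is a unit when `u` is. -/
private lemma isUnit_upperTri (e : R) {u : R} (hu : IsUnit u) : IsUnit (!![1,e;0,u]) := by
  obtain ⟨v, hv⟩ := hu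
  apply isUnit_of_mul_eq_one_both (N := !![1, -(e * ↑v⁻¹); 0, (↑v⁻¹ : R)]) <;>
    simp [Matrix.mul_fin_two, Matrix.one_fin_two, ← hv, mul_assoc, v.mul_inv, v.inv_mul]

/-- Multiplying an admissible pair on the left by a common factor that fixes it forces
the factor to be `1`. -/
private lemma eq_one_of_fix {a b x : R} (hab : Admissible a b)
    (h1 : x * a = a) (h2 : x * b = b) : x = 1 := by
  obtain ⟨M, hM, hM00, hM01⟩ := hab
  obtain ⟨u, hu⟩ := hM
  have hDM : !![x, 0; 0, 1] * M = M := by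
    ext i j
    fin_cases i <;> fin_cases j <;>
      simp [Matrix.mul_apply, Fin.sum_univ_two, hM00, hM01, h1, h2]
  have hD : !![x, 0; 0, (1:R)] = 1 := by
    calc !![x, 0; 0, (1:R)] = (!![x, 0; 0, (1:R)] * M) * (u⁻¹ : (Matrix (Fin 2) (Fin 2) R)ˣ).val := by
          rw [mul_assoc, ← hu, u.mul_inv, mul_one]
      _ = M * (u⁻¹ : (Matrix (Fin 2) (Fin 2) R)ˣ).val := by rw [hDM]
      _ = 1 := by rw [← hu]; exact u.mul_inv
  have := congrFun (congrFun hD 0) 0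
  simpa [Matrix.one_apply] using this

/-- Admissible representatives of the same point differ by a left unit. -/
private lemma rep_unit {a b a' b' : R} (hab : Admissible a b) (hab' : Admissible a' b')
    (h : pt R a b = pt R a' b') : ∃ u : Rˣ, a' = ↑u * a ∧ b' = ↑u * b := by
  have hm1 : (![a', b'] : Fin 2 → R) ∈ pt R a b := by
    rw [h]; exact Submodule.mem_span_singleton_self _
  have hm2 : (![a, b] : Fin 2 → R) ∈ pt R a' b' := by
    rw [← h]; exact Submodule.mem_span_singleton_self _
  obtain ⟨r, hr⟩ := Submodule.mem_span_singleton.mp hm1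
  obtain ⟨s, hs⟩ := Submodule.mem_span_singleton.mp hm2
  have hra : r * a = a' := by simpa using congrFun hr 0
  have hrb : r * b = b' := by simpa using congrFun hr 1
  have hsa : s * a' = a := by simpa using congrFun hs 0
  have hsb : s * b' = b := by simpa using congrFun hs 1
  have hsr : s * r = 1 := eq_one_of_fix hab
    (by rw [mul_assoc, hra, hsa]) (by rw [mul_assoc, hrb, hsb])
  have hrs : r * s = 1 := eq_one_of_fix hab'
    (by rw [mul_assoc, hsa, hra]) (by rw [mul_assoc, hsb, hrb])
  exact ⟨⟨r, s, hrs, hsr⟩, hra.symm, hrb.symm⟩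

/-- Scaling by a unit does not change the point. -/
private lemma pt_unit_smul (u : Rˣ) (a b : R) : pt R (↑u * a) (↑u * b) = pt R a b := by
  have key : ∀ (v : Rˣ) (c d : R), pt R (↑v * c) (↑v * d) ≤ pt R c d := by
    intro v c d
    rw [pt, Submodule.span_le, Set.singleton_subset_iff]
    have : (![↑v * c, ↑v * d] : Fin 2 → R) = (↑v : R) • ![c, d] := by
      ext i; fin_cases i <;> simp
    rw [SetLike.mem_coe, this]
    exact Submodule.smul_mem _ _ (Submodule.mem_span_singleton_self _)
  refine le_antisymm (key u a b) ?_
  have := key u⁻¹ (↑u * a) (↑u * b)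
  simpa [← mul_assoc, u.inv_mul] using this

private lemma admissible_snd {a b c d : R} (h : IsUnit (!![a,b;c,d])) : Admissible c d := by
  refine ⟨!![(0:R),1;1,0] * !![a,b;c,d], swap_unit.mul h, ?_, ?_⟩ <;>
    simp [Matrix.mul_apply, Fin.sum_univ_two]

private lemma distant_iff {a b c d : R} (hab : Admissible a b) (hcd : Admissible c d) :
    Distant (pt R a b) (pt R c d) ↔ IsUnit (!![a,b;c,d]) := by
  constructor
  · rintro ⟨a₁, b₁, c₁, d₁, h1, h2, hM⟩
    have hab₁ : Admissible a₁ b₁ := ⟨!![a₁,b₁;c₁,d₁], hM, by simp, by simp⟩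
    have hcd₁ : Admissible c₁ d₁ := admissible_snd hM
    obtain ⟨u, hu1, hu2⟩ := rep_unit hab hab₁ h1
    obtain ⟨v, hv1, hv2⟩ := rep_unit hcd hcd₁ h2
    have hD : !![a₁,b₁;c₁,d₁] = !![(↑u:R), 0; 0, ↑v] * !![a,b;c,d] := by
      ext i j
      fin_cases i <;> fin_cases j <;>
        simp [Matrix.mul_apply, Fin.sum_univ_two, hu1, hu2, hv1, hv2]
    have hDu : IsUnit (!![(↑u:R), 0; 0, (↑v:R)]) := by
      apply isUnit_of_mul_eq_one_both (N := !![(↑u⁻¹:R), 0; 0, ↑v⁻¹]) <;>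
        simp [Matrix.mul_fin_two, Matrix.one_fin_two, u.mul_inv, u.inv_mul, v.mul_inv, v.inv_mul]
    obtain ⟨w, hw⟩ := hDu
    have : !![a,b;c,d] = (w⁻¹ : (Matrix (Fin 2) (Fin 2) R)ˣ).val * !![a₁,b₁;c₁,d₁] := by
      rw [hD, ← hw, ← mul_assoc, w.inv_mul, one_mul]
    rw [this]
    exact (w⁻¹.isUnit).mul hM
  · intro h
    exact ⟨a, b, c, d, rfl, rfl, h⟩

/-- In any ring, an element of the Jacobson radical satisfies: `1 - y*b` is a unit for all `y`. -/
private lemma jac_unit {b : R} (hb : b ∈ (⊥ : Ideal R).jacobson) (y : R) :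
    IsUnit (1 - y * b) := by
  have hb' : ∀ m : Ideal R, m.IsMaximal → b ∈ m := by
    intro m hm
    rw [Ideal.jacobson] at hb
    exact Submodule.mem_sInf.mp hb m ⟨bot_le, hm⟩
  have hL : ∀ c : R, ∃ z : R, z * (1 - c * b) = 1 := by
    intro c
    by_contra hno
    push_neg at hno
    have hne : Ideal.span {1 - c * b} ≠ ⊤ := by
      intro htop
      have h1 : (1:R) ∈ Ideal.span {1 - c * b} := htop ▸ Submodule.mem_top
      obtain ⟨z, hz⟩ := Submodule.mem_span_singleton.mp h1
      exact hno z (by simpa [smul_eq_mul] using hz)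
    obtain ⟨m, hmax, hle⟩ := Ideal.exists_le_maximal _ hne
    have h1 : (1 - c * b) ∈ m := hle (Ideal.subset_span rfl)
    have h2 : c * b ∈ m := Ideal.mul_mem_left m c (hb' m hmax)
    have : (1:R) ∈ m := by simpa using m.add_mem h1 h2
    exact hmax.ne_top (Ideal.eq_top_of_isUnit_mem m this isUnit_one)
  obtain ⟨z, hz⟩ := hL y
  obtain ⟨w, hw⟩ := hL (-(z * y))
  have hz' : z = 1 - -(z * y) * b := by
    have h' : z * (1 - y * b) = z - z * (y * b) := by noncomm_ring
    rw [h'] at hz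
    linear_combination (norm := noncomm_ring) hz
  have hwz : w * z = 1 := by rw [hz']; exact hw
  have hfin : (1 - y * b) = w := by
    calc (1 - y * b) = (w * z) * (1 - y * b) := by rw [hwz, one_mul]
      _ = w * (z * (1 - y * b)) := by rw [mul_assoc]
      _ = w := by rw [hz, mul_one]
  exact ⟨⟨1 - y * b, z, by rw [hfin, hwz], hz⟩, rfl⟩

/-- Conversely, if `1 - y*b` is a unit for all `y`, then `b` lies in the Jacobson radical. -/
private lemma mem_jac {b : R} (h : ∀ y, IsUnit (1 - y * b)) : b ∈ (⊥ : Ideal R).jacobson := by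
  rw [Ideal.jacobson]
  refine Submodule.mem_sInf.mpr ?_
  rintro m ⟨-, hmax⟩
  by_contra hb
  have hlt : m < m ⊔ Ideal.span {b} := by
    refine left_lt_sup.mpr fun hle => hb ?_
    exact hle (Ideal.subset_span rfl)
  have htop : m ⊔ Ideal.span {b} = ⊤ := hmax.1.2 _ hlt
  have h1 : (1:R) ∈ m ⊔ Ideal.span {b} := htop ▸ Submodule.mem_top
  obtain ⟨z, hz, w, hw, hzw⟩ := Submodule.mem_sup.mp h1
  obtain ⟨y, hy⟩ := Submodule.mem_span_singleton.mp hw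
  have hzu : z = 1 - y * b := by
    rw [← hzw, ← hy, smul_eq_mul]; noncomm_ring
  exact hmax.ne_top (Ideal.eq_top_of_isUnit_mem m hz (hzu ▸ h y))


end Aux

/-- Theorem 1: `R(1,0)` is radically parallel to `q ∈ P(R)` iff `q = R(1,b)`
for some `b` in the Jacobson radical of `R`. -/
theorem radParallel_infty_iff (R : Type*) [Ring R] [Nontrivial R]
    (q : Submodule R (Fin 2 → R)) (hq : q ∈ ProjLine R) :
    RadParallel (pt R 1 0) q ↔ ∃ b ∈ (⊥ : Ideal R).jacobson, q = pt R 1 b := by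
  constructor
  · intro h
    obtain ⟨a, b, hab, rfl⟩ := hq
    have adm01 : Admissible (0:R) 1 := ⟨!![(0:R),1;1,0], swap_unit, by simp, by simp⟩
    have hd := h _ ⟨0, 1, adm01, rfl⟩ ⟨0, 1, 1, 0, rfl, rfl, swap_unit⟩
    have hM : IsUnit (!![(0:R),1;a,b]) := (distant_iff adm01 hab).mp hd
    have hSM : !![(0:R),1;1,0] * !![(0:R),1;a,b] = !![a,b;0,1] := by
      ext i j; fin_cases i <;> fin_cases j <;> simp [Matrix.mul_apply, Fin.sum_univ_two]
    obtain ⟨ua, hua⟩ := isUnit_a_of (hSM ▸ swap_unit.mul hM)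
    set b₀ := (↑ua⁻¹ : R) * b with hb₀
    have h1a : (↑ua⁻¹ : R) * a = 1 := by rw [← hua]; exact ua.inv_mul
    have hq1 : pt R a b = pt R 1 b₀ := by
      rw [← pt_unit_smul ua⁻¹ a b, h1a]
    have adm1b : Admissible (1:R) b₀ :=
      ⟨!![1,b₀;0,1], isUnit_upperTri b₀ isUnit_one, by simp, by simp⟩
    refine ⟨b₀, ?_, hq1⟩
    apply mem_jac
    intro y
    have hyu : IsUnit (!![y,1;1,0]) := by
      apply isUnit_of_mul_eq_one_both (N := !![0,1;1,-y]) <;>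
        simp [Matrix.mul_fin_two, Matrix.one_fin_two, mul_comm]
    have admy1 : Admissible y 1 := ⟨!![y,1;1,0], hyu, by simp, by simp⟩
    have hd2 := h _ ⟨y, 1, admy1, rfl⟩ ⟨y, 1, 1, 0, rfl, rfl, hyu⟩
    rw [hq1] at hd2
    have hM2 : IsUnit (!![y,1;1,b₀]) := (distant_iff admy1 adm1b).mp hd2
    have hE : IsUnit (!![(1:R),-y;0,1]) := isUnit_upperTri (-y) isUnit_one
    have hEM : !![(1:R),-y;0,1] * !![y,1;1,b₀] = !![0, 1 - y*b₀; 1, b₀] := by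
      ext i j; fin_cases i <;> fin_cases j <;>
        simp [Matrix.mul_apply, Fin.sum_univ_two, sub_eq_add_neg]
    have hSEM : !![(0:R),1;1,0] * !![0, 1 - y*b₀; 1, b₀] = !![1, b₀; 0, 1 - y*b₀] := by
      ext i j; fin_cases i <;> fin_cases j <;> simp [Matrix.mul_apply, Fin.sum_univ_two]
    exact isUnit_d_of (hSEM ▸ swap_unit.mul (hEM ▸ hE.mul hM2))
  · rintro ⟨b, hbJ, rfl⟩
    intro x hx hdx
    obtain ⟨a₀, b₀, hadm, rfl⟩ := hx
    have adm10 : Admissible (1:R) 0 := ⟨1, isUnit_one, by simp [Matrix.one_apply], by simp [Matrix.one_apply]⟩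
    obtain ⟨un, hun⟩ := (distant_iff hadm adm10).mp hdx
    set K := (un⁻¹ : (Matrix (Fin 2) (Fin 2) R)ˣ).val with hK
    have hKN : K * !![a₀,b₀;1,0] = 1 := by rw [← hun]; exact un.inv_mul
    have hsplit : !![a₀,b₀;1,b] = !![a₀,b₀;1,0] + !![0,0;0,b] := by
      ext i j; fin_cases i <;> fin_cases j <;> simp
    have hT : K * !![a₀,b₀;1,b] = !![1, K 0 1 * b; 0, 1 + K 1 1 * b] := by
      rw [hsplit, Matrix.mul_add, hKN]
      ext i j
      fin_cases i <;> fin_cases j <;>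
        simp [Matrix.mul_apply, Fin.sum_univ_two, Matrix.one_apply]
    have hu' : IsUnit (1 + K 1 1 * b) := by
      have := jac_unit hbJ (-(K 1 1))
      simpa [neg_mul, sub_neg_eq_add] using this
    have hTu : IsUnit (!![1, K 0 1 * b; 0, 1 + K 1 1 * b]) := isUnit_upperTri _ hu'
    have hfin : !![a₀,b₀;1,b] = un.val * (K * !![a₀,b₀;1,b]) := by
      rw [← mul_assoc, un.mul_inv, one_mul]
    have : IsUnit (!![a₀,b₀;1,b]) := by
      rw [hfin, hT]; exact un.isUnit.mul hTu
    exact ⟨a₀, b₀, 1, b, rfl, rfl, this⟩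
end

section
/- Radical parallelism on the projective line over a ring is an equivalence relation: it is reflexive, symmetric, and transitive. -/
open Matrix

namespace RadPar
set_option linter.unusedSectionVars false
variable {R : Type*} [Ring R]

lemma vec_eta (v : Fin 2 → R) : ![v 0, v 1] = v := by
  funext i; fin_cases i <;> rfl

/-- The 2×2 matrix with rows `r` and `s`. -/
def rmat (r s : Fin 2 → R) : Matrix (Fin 2) (Fin 2) R := Matrix.of ![r, s]

lemma rmat_eq (r s : Fin 2 → R) : rmat r s = !![r 0, r 1; s 0, s 1] := by
  rw [show (!![r 0, r 1; s 0, s 1]) = Matrix.of ![![r 0, r 1], ![s 0, s 1]] from rfl,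
    vec_eta r, vec_eta s]; rfl

lemma unit_inv {M : Matrix (Fin 2) (Fin 2) R} (h : IsUnit M) :
    ∃ B : Matrix (Fin 2) (Fin 2) R, M * B = 1 ∧ B * M = 1 := by
  obtain ⟨U, rfl⟩ := h
  exact ⟨U.inv, U.val_inv, U.inv_val⟩

lemma isUnit_of_mul_eq {M N : Matrix (Fin 2) (Fin 2) R}
    (h1 : M * N = 1) (h2 : N * M = 1) : IsUnit M :=
  ⟨⟨M, N, h1, h2⟩, rfl⟩

lemma unit_left_cancel {D X : Matrix (Fin 2) (Fin 2) R} (hD : IsUnit D)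
    (h : IsUnit (D * X)) : IsUnit X := by
  obtain ⟨B, h1, h2⟩ := unit_inv hD
  have hB : IsUnit B := isUnit_of_mul_eq h2 h1
  have : X = B * (D * X) := by rw [← mul_assoc, h2, one_mul]
  rw [this]
  exact hB.mul h

lemma E1_unit (t : R) : IsUnit !![(1:R), t; 0, 1] := by
  apply isUnit_of_mul_eq (N := !![(1:R), -t; 0, 1]) <;>
  · ext i j
    fin_cases i <;> fin_cases j <;>
      simp [Matrix.mul_apply, Fin.sum_univ_two, Matrix.one_apply]

lemma swap_unit : IsUnit !![(0:R), 1; 1, 0] := by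
  apply isUnit_of_mul_eq (N := !![(0:R), 1; 1, 0]) <;>
  · ext i j
    fin_cases i <;> fin_cases j <;>
      simp [Matrix.mul_apply, Fin.sum_univ_two, Matrix.one_apply]

lemma t_unit (t : R) : IsUnit !![t, 1; 1, 0] := by
  apply isUnit_of_mul_eq (N := !![(0:R), 1; 1, -t]) <;>
  · ext i j
    fin_cases i <;> fin_cases j <;>
      simp [Matrix.mul_apply, Fin.sum_univ_two, Matrix.one_apply]

lemma diag_unit {u w : R} (hu : IsUnit u) (hw : IsUnit w) :
    IsUnit !![u, 0; 0, w] := by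
  obtain ⟨u, rfl⟩ := hu
  obtain ⟨w, rfl⟩ := hw
  apply isUnit_of_mul_eq (N := !![((u⁻¹ : Rˣ) : R), 0; 0, ((w⁻¹ : Rˣ) : R)]) <;>
  · ext i j
    fin_cases i <;> fin_cases j <;>
      simp [Matrix.mul_apply, Fin.sum_univ_two, Matrix.one_apply]

lemma tri_unit {u : R} (c : R) (hu : IsUnit u) : IsUnit !![(1:R), c; 0, u] := by
  obtain ⟨u, rfl⟩ := hu
  apply isUnit_of_mul_eq (N := !![(1:R), -(c * ((u⁻¹:Rˣ):R)); 0, ((u⁻¹:Rˣ):R)]) <;>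
  · ext i j
    fin_cases i <;> fin_cases j <;>
      simp [Matrix.mul_apply, Fin.sum_univ_two, Matrix.one_apply, mul_assoc]

lemma mulRows (r s : Fin 2 → R) (G : Matrix (Fin 2) (Fin 2) R) :
    rmat r s * G = rmat (vecMul r G) (vecMul s G) := by
  ext i j
  fin_cases i <;> simp [rmat, Matrix.mul_apply, Matrix.vecMul, dotProduct]

lemma dmul (u w : R) (r s : Fin 2 → R) :
    !![u, 0; 0, w] * rmat r s = rmat (u • r) (w • s) := by
  ext i j
  fin_cases i <;> fin_cases j <;>
    simp [rmat, Matrix.mul_apply, Fin.sum_univ_two]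

lemma unit_c {c d : R} (h : IsUnit !![(0:R), 1; c, d]) : IsUnit c := by
  obtain ⟨B, h1, h2⟩ := unit_inv h
  have e01 : (!![(0:R), 1; c, d] * B) 0 1 = (1 : Matrix (Fin 2) (Fin 2) R) 0 1 := by rw [h1]
  have e11 : (!![(0:R), 1; c, d] * B) 1 1 = (1 : Matrix (Fin 2) (Fin 2) R) 1 1 := by rw [h1]
  have f00 : (B * !![(0:R), 1; c, d]) 0 0 = (1 : Matrix (Fin 2) (Fin 2) R) 0 0 := by rw [h2]
  simp [Matrix.mul_apply, Fin.sum_univ_two, Matrix.one_apply] at e01 e11 f00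
  rw [e01, mul_zero, add_zero] at e11
  exact ⟨⟨c, B 0 1, e11, f00⟩, rfl⟩

lemma unit_b {b d : R} (h : IsUnit !![(0:R), b; 1, d]) : IsUnit b := by
  obtain ⟨B, h1, h2⟩ := unit_inv h
  have e00 : (!![(0:R), b; 1, d] * B) 0 0 = (1 : Matrix (Fin 2) (Fin 2) R) 0 0 := by rw [h1]
  have f10 : (B * !![(0:R), b; 1, d]) 1 0 = (1 : Matrix (Fin 2) (Fin 2) R) 1 0 := by rw [h2]
  have f11 : (B * !![(0:R), b; 1, d]) 1 1 = (1 : Matrix (Fin 2) (Fin 2) R) 1 1 := by rw [h2]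
  simp [Matrix.mul_apply, Fin.sum_univ_two, Matrix.one_apply] at e00 f10 f11
  rw [f10, zero_mul, add_zero] at f11
  exact ⟨⟨b, B 1 0, e00, f11⟩, rfl⟩

lemma rad_extract {t y : R} (h : IsUnit !![t, 1; 1, y]) : IsUnit (1 - t * y) := by
  have key : !![(1:R), -t; 0, 1] * !![t, 1; 1, y] = !![0, 1 - t * y; 1, y] := by
    ext i j
    fin_cases i <;> fin_cases j <;>
      · simp [Matrix.mul_apply, Fin.sum_univ_two]
        try noncomm_ring
  have hu : IsUnit !![(1:R), -t; 0, 1] := E1_unit (-t)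
  exact unit_b (key ▸ hu.mul h)

lemma step {y : R} (hy : ∀ t : R, IsUnit (1 - t * y)) (e f : R)
    (h : IsUnit !![e, f; 1, y]) : IsUnit !![e, f; 1, 0] := by
  obtain ⟨B, h1, h2⟩ := unit_inv h
  have q01 : (!![e, f; 1, y] * B) 0 1 = (1 : Matrix (Fin 2) (Fin 2) R) 0 1 := by rw [h1]
  have q11 : (!![e, f; 1, y] * B) 1 1 = (1 : Matrix (Fin 2) (Fin 2) R) 1 1 := by rw [h1]
  simp [Matrix.mul_apply, Fin.sum_univ_two, Matrix.one_apply] at q01 q11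
  set T : Matrix (Fin 2) (Fin 2) R := !![1, -(B 0 1 * y); 0, 1 - B 1 1 * y] with hT
  have hTu : IsUnit T := tri_unit _ (hy (B 1 1))
  have factor : !![e, f; 1, 0] = !![e, f; 1, y] * T := by
    have key1 : (e * B 0 1 + f * B 1 1) * y = 0 := by rw [q01, zero_mul]
    have key2 : (B 0 1 + y * B 1 1) * y = y := by rw [q11, one_mul]
    ext i j
    fin_cases i <;> fin_cases j <;>
        simp [hT, Matrix.mul_apply, Fin.sum_univ_two]
    · rw [show -(e * (B 0 1 * y)) + f * (1 - B 1 1 * y)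
          = f - (e * B 0 1 + f * B 1 1) * y from by noncomm_ring, key1, sub_zero]
    · rw [show -(B 0 1 * y) + y * (1 - B 1 1 * y)
          = y - (B 0 1 + y * B 1 1) * y from by noncomm_ring, key2, sub_self]
  rw [factor]
  exact h.mul hTu

/-- A row vector is admissible if it is the first row of an invertible matrix. -/
def AdmRow (v : Fin 2 → R) : Prop :=
  ∃ M : Matrix (Fin 2) (Fin 2) R, IsUnit M ∧ M 0 = v

lemma adm_pair_row {a b : R} (h : Admissible a b) : AdmRow ![a, b] := by
  obtain ⟨M, hM, ha, hb⟩ := h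
  refine ⟨M, hM, ?_⟩
  funext i; fin_cases i <;> simp [ha, hb]

lemma adm_row_pair {v : Fin 2 → R} (h : AdmRow v) : Admissible (v 0) (v 1) := by
  obtain ⟨M, hM, h0⟩ := h
  exact ⟨M, hM, congrFun h0 0, congrFun h0 1⟩

lemma row1_adm {r s : Fin 2 → R} (h : IsUnit (rmat r s)) : AdmRow s := by
  refine ⟨!![0, 1; 1, 0] * rmat r s, swap_unit.mul h, ?_⟩
  funext j
  simp [Matrix.mul_apply, Fin.sum_univ_two, rmat]

lemma vecMul_row (N B : Matrix (Fin 2) (Fin 2) R) (i : Fin 2) :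
    vecMul (N i) B = (N * B) i := by
  funext j
  simp [Matrix.vecMul, Matrix.mul_apply, dotProduct]

lemma one_row0 : (1 : Matrix (Fin 2) (Fin 2) R) 0 = ![1, 0] := by
  funext j; fin_cases j <;> simp [Matrix.one_apply]

/-- Two admissible rows spanning the same submodule differ by a unit. -/
lemma span_eq_unit_smul {v w : Fin 2 → R} (hv : AdmRow v) (hw : AdmRow w)
    (h : Submodule.span R {v} = Submodule.span R {w}) :
    ∃ u : R, IsUnit u ∧ w = u • v := by
  have hwv : w ∈ Submodule.span R {v} := by
    rw [h]; exact Submodule.mem_span_singleton_self w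
  have hvw : v ∈ Submodule.span R {w} := by
    rw [← h]; exact Submodule.mem_span_singleton_self v
  obtain ⟨r, hr⟩ := Submodule.mem_span_singleton.mp hwv
  obtain ⟨s, hs⟩ := Submodule.mem_span_singleton.mp hvw
  obtain ⟨M, hM, hM0⟩ := hv
  obtain ⟨N, hN, hN0⟩ := hw
  obtain ⟨B, hB1, _⟩ := unit_inv hM
  obtain ⟨C, hC1, _⟩ := unit_inv hN
  have ev : v 0 * B 0 0 + v 1 * B 1 0 = 1 := by
    have : (M * B) 0 0 = (1 : Matrix (Fin 2) (Fin 2) R) 0 0 := by rw [hB1]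
    simpa [Matrix.mul_apply, Fin.sum_univ_two, Matrix.one_apply, hM0] using this
  have ew : w 0 * C 0 0 + w 1 * C 1 0 = 1 := by
    have : (N * C) 0 0 = (1 : Matrix (Fin 2) (Fin 2) R) 0 0 := by rw [hC1]
    simpa [Matrix.mul_apply, Fin.sum_univ_two, Matrix.one_apply, hN0] using this
  have hv2 : v = (s * r) • v := by rw [← smul_smul, hr, hs]
  have hw2 : w = (r * s) • w := by rw [← smul_smul, hs, hr]
  have hsr : s * r = 1 := by
    have h0 : v 0 = (s * r) * v 0 := by
      conv_lhs => rw [hv2]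
      simp [Pi.smul_apply, smul_eq_mul]
    have h1 : v 1 = (s * r) * v 1 := by
      conv_lhs => rw [hv2]
      simp [Pi.smul_apply, smul_eq_mul]
    calc s * r = (s * r) * (v 0 * B 0 0 + v 1 * B 1 0) := by rw [ev, mul_one]
    _ = ((s * r) * v 0) * B 0 0 + ((s * r) * v 1) * B 1 0 := by noncomm_ring
    _ = v 0 * B 0 0 + v 1 * B 1 0 := by rw [← h0, ← h1]
    _ = 1 := ev
  have hrs : r * s = 1 := by
    have h0 : w 0 = (r * s) * w 0 := by
      conv_lhs => rw [hw2]
      simp [Pi.smul_apply, smul_eq_mul]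
    have h1 : w 1 = (r * s) * w 1 := by
      conv_lhs => rw [hw2]
      simp [Pi.smul_apply, smul_eq_mul]
    calc r * s = (r * s) * (w 0 * C 0 0 + w 1 * C 1 0) := by rw [ew, mul_one]
    _ = ((r * s) * w 0) * C 0 0 + ((r * s) * w 1) * C 1 0 := by noncomm_ring
    _ = w 0 * C 0 0 + w 1 * C 1 0 := by rw [← h0, ← h1]
    _ = 1 := ew
  exact ⟨r, ⟨⟨r, s, hrs, hsr⟩, rfl⟩, hr.symm⟩

/-- Row-level radical parallelism. -/
def RelV (v w : Fin 2 → R) : Prop :=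
  ∀ u : Fin 2 → R, IsUnit (rmat u v) → IsUnit (rmat u w)

lemma relV_mul {v w : Fin 2 → R} {G : Matrix (Fin 2) (Fin 2) R}
    (hG : IsUnit G) (h : RelV v w) : RelV (vecMul v G) (vecMul w G) := by
  intro u hu
  obtain ⟨B, h1, h2⟩ := unit_inv hG
  have hB : IsUnit B := isUnit_of_mul_eq h2 h1
  have hu' : vecMul (vecMul u B) G = u := by
    rw [Matrix.vecMul_vecMul, h2, Matrix.vecMul_one]
  have e1 : rmat (vecMul u B) v * G = rmat u (vecMul v G) := by
    rw [mulRows, hu']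
  have e2 : rmat (vecMul u B) w * G = rmat u (vecMul w G) := by
    rw [mulRows, hu']
  have : IsUnit (rmat (vecMul u B) v) := by
    have : IsUnit (rmat (vecMul u B) v * G * B) := by
      rw [e1]; exact hu.mul hB
    rwa [mul_assoc, h1, mul_one] at this
  rw [← e2]
  exact (h _ this).mul hG

lemma relV_normalized {w : Fin 2 → R} (hw : AdmRow w) (h : RelV ![1, 0] w) :
    RelV w ![1, 0] := by
  -- w 0 is a unit
  have h01 : IsUnit (rmat ![(0:R), 1] w) := h ![0, 1] swap_unit
  have hw0 : IsUnit (w 0) := by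
    apply unit_c (d := w 1)
    have := h01
    rwa [rmat_eq] at this
  obtain ⟨U, hU⟩ := hw0
  set y : R := ((U⁻¹ : Rˣ) : R) * w 1 with hy
  have hwuy : w = w 0 • ![1, y] := by
    funext i; fin_cases i
    · simp [Pi.smul_apply, smul_eq_mul]
    · simp only [Pi.smul_apply, smul_eq_mul]
      show w 1 = w 0 * (((U⁻¹ : Rˣ) : R) * w 1)
      rw [← mul_assoc, ← hU, U.mul_inv, one_mul]
  have hdiag : IsUnit !![(1:R), 0; 0, w 0] := diag_unit isUnit_one ⟨U, hU⟩
  have hfact : ∀ r : Fin 2 → R, rmat r w = !![(1:R), 0; 0, w 0] * rmat r ![1, y] := by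
    intro r
    rw [dmul, one_smul, ← hwuy]
  have hrad : ∀ t : R, IsUnit (1 - t * y) := by
    intro t
    have h1 : IsUnit (rmat ![t, 1] ![1, 0]) := t_unit t
    have h2 := h ![t, 1] h1
    rw [hfact] at h2
    have h3 : IsUnit (rmat ![t, 1] ![1, y]) := unit_left_cancel hdiag h2
    exact rad_extract h3
  -- now prove RelV w ![1,0]
  intro r hr
  rw [hfact] at hr
  have h3 : IsUnit (rmat r ![1, y]) := unit_left_cancel hdiag hr
  have h4 : IsUnit !![r 0, r 1; 1, y] := by
    rwa [rmat_eq] at h3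
  have h5 : IsUnit !![r 0, r 1; 1, 0] := step hrad _ _ h4
  rw [rmat_eq]
  simpa using h5

lemma relV_symm {v w : Fin 2 → R} (hv : AdmRow v) (hw : AdmRow w)
    (h : RelV v w) : RelV w v := by
  obtain ⟨M, hM, hM0⟩ := hv
  obtain ⟨B, h1, h2⟩ := unit_inv hM
  have hB : IsUnit B := isUnit_of_mul_eq h2 h1
  have hvB : vecMul v B = ![1, 0] := by
    rw [← hM0, vecMul_row, h1, one_row0]
  have h' : RelV ![1, 0] (vecMul w B) := by
    have := relV_mul hB h
    rwa [hvB] at this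
  have hw' : AdmRow (vecMul w B) := by
    obtain ⟨N, hN, hN0⟩ := hw
    exact ⟨N * B, hN.mul hB, by rw [← hN0, vecMul_row]⟩
  have h'' : RelV (vecMul w B) ![1, 0] := relV_normalized hw' h'
  have h''' := relV_mul hM h''
  have e1 : vecMul (vecMul w B) M = w := by
    rw [Matrix.vecMul_vecMul, h2, Matrix.vecMul_one]
  have e2 : vecMul ![(1:R), 0] M = v := by
    rw [← one_row0, vecMul_row, one_mul, hM0]
  rwa [e1, e2] at h'''

lemma pt_eta (v : Fin 2 → R) : pt R (v 0) (v 1) = Submodule.span R {v} := by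
  rw [pt, vec_eta]

lemma distant_of_rmat {r w : Fin 2 → R} (h : IsUnit (rmat r w)) :
    Distant (Submodule.span R {r}) (Submodule.span R {w}) := by
  refine ⟨r 0, r 1, w 0, w 1, (pt_eta r).symm, (pt_eta w).symm, ?_⟩
  rwa [rmat_eq] at h

lemma rmat_of_distant {x : Submodule R (Fin 2 → R)} {w : Fin 2 → R}
    (hw : AdmRow w) (h : Distant x (Submodule.span R {w})) :
    ∃ r : Fin 2 → R, AdmRow r ∧ x = Submodule.span R {r} ∧ IsUnit (rmat r w) := by
  obtain ⟨a, b, c, d, hx, hq, hU⟩ := h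
  have hU' : IsUnit (rmat ![a, b] ![c, d]) := hU
  have hadm_cd : AdmRow ![c, d] := row1_adm hU'
  obtain ⟨u, huu, hcd⟩ := span_eq_unit_smul hw hadm_cd
    (by rw [hq, pt])
  have hfact : rmat ![a, b] ![c, d] = !![(1:R), 0; 0, u] * rmat ![a, b] w := by
    rw [dmul, one_smul, ← hcd]
  have hu2 : IsUnit (rmat ![a, b] w) := by
    rw [hfact] at hU'
    exact unit_left_cancel (diag_unit isUnit_one huu) hU'
  exact ⟨![a, b], ⟨rmat ![a, b] ![c, d], hU', rfl⟩, by rw [hx, pt], hu2⟩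

lemma radParallel_iff_relV {v w : Fin 2 → R} (hv : AdmRow v) (hw : AdmRow w) :
    RadParallel (Submodule.span R {v}) (Submodule.span R {w}) ↔ RelV v w := by
  constructor
  · intro H r hr
    have hradm : AdmRow r := ⟨rmat r v, hr, rfl⟩
    have hx : Submodule.span R {r} ∈ ProjLine R :=
      ⟨r 0, r 1, adm_row_pair hradm, (pt_eta r).symm⟩
    have hd : Distant (Submodule.span R {r}) (Submodule.span R {v}) :=
      distant_of_rmat hr
    obtain ⟨r', hr', hx', hU⟩ := rmat_of_distant hw (H _ hx hd)
    obtain ⟨u, hu, hru⟩ := span_eq_unit_smul hradm hr' hx'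
    have hfact : rmat r' w = !![u, 0; 0, (1:R)] * rmat r w := by
      rw [dmul, one_smul, ← hru]
    rw [hfact] at hU
    exact unit_left_cancel (diag_unit hu isUnit_one) hU
  · intro H x hx hd
    obtain ⟨r, hradm, hxr, hU⟩ := rmat_of_distant hv hd
    rw [hxr]
    exact distant_of_rmat (H r hU)

end RadPar

open RadPar in
/-- Radical parallelism on the projective line is an equivalence relation:
reflexive, symmetric, and transitive. -/
theorem radParallel_equivalence (R : Type*) [Ring R] [Nontrivial R] :
    (∀ p ∈ ProjLine R, RadParallel p p) ∧
    (∀ p ∈ ProjLine R, ∀ q ∈ ProjLine R, RadParallel p q → RadParallel q p) ∧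
    (∀ p ∈ ProjLine R, ∀ q ∈ ProjLine R, ∀ r ∈ ProjLine R,
      RadParallel p q → RadParallel q r → RadParallel p r) := by
  refine ⟨?_, ?_, ?_⟩
  · intro p _ x _ hd
    exact hd
  · rintro p ⟨a, b, hab, rfl⟩ q ⟨c, d, hcd, rfl⟩ H
    have hv : AdmRow ![a, b] := adm_pair_row hab
    have hw : AdmRow ![c, d] := adm_pair_row hcd
    rw [pt] at H ⊢
    rw [pt]
    exact (radParallel_iff_relV hw hv).mpr (relV_symm hv hw
      ((radParallel_iff_relV hv hw).mp H))
  · intro p _ q _ r _ H1 H2 x hx hd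
    exact H2 x hx (H1 x hx hd)
end

section
/- On the projective line over a ring R, the neighbourhood of a point p in the distant graph cannot be a proper subset of the neighbourhood of another point q; that is, if every point distant to p is distant to q, then every point distant to q is distant to p. -/
open Matrix

section Aux

set_option linter.unusedSectionVars false

variable {R : Type*} [Ring R]

lemma aux_entry_eq {A B : Matrix (Fin 2) (Fin 2) R} (h : A = B) (i j : Fin 2) :
    A i j = B i j := by rw [h]

lemma aux_mul2 (a b c d e f g k : R) :
    !![a, b; c, d] * !![e, f; g, k] = !![a*e + b*g, a*f + b*k; c*e + d*g, c*f + d*k] := by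
  ext i j
  fin_cases i <;> fin_cases j <;> simp [Matrix.mul_apply, Fin.sum_univ_two]

lemma aux_isUnit_of_mul2 {A B : Matrix (Fin 2) (Fin 2) R} (h1 : A * B = 1) (h2 : B * A = 1) :
    IsUnit A := ⟨⟨A, B, h1, h2⟩, rfl⟩

lemma aux_vec2_smul (r a b : R) : r • (![a, b] : Fin 2 → R) = ![r * a, r * b] := by
  funext i; fin_cases i <;> simp

lemma aux_pt_unit_smul {u : R} (hu : IsUnit u) (a b : R) :
    pt R (u * a) (u * b) = pt R a b := by
  unfold pt
  rw [← aux_vec2_smul, Submodule.span_singleton_smul_eq hu]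

lemma aux_diag_mul (u w a b c d : R) :
    !![u, 0; 0, w] * !![a, b; c, d] = !![u*a, u*b; w*c, w*d] := by
  rw [aux_mul2]; ext i j; fin_cases i <;> fin_cases j <;> simp

lemma aux_diag_unit {u w : R} (hu : IsUnit u) (hw : IsUnit w) :
    IsUnit (!![u, 0; 0, w] : Matrix (Fin 2) (Fin 2) R) := by
  refine aux_isUnit_of_mul2 (B := !![(↑hu.unit⁻¹ : R), 0; 0, (↑hw.unit⁻¹ : R)]) ?_ ?_ <;>
  · rw [aux_mul2]
    ext i j
    fin_cases i <;> fin_cases j <;>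
      simp [Matrix.one_apply, IsUnit.mul_val_inv, IsUnit.val_inv_mul]

lemma aux_swap_unit : IsUnit (!![(0:R), 1; 1, 0]) := by
  refine aux_isUnit_of_mul2 (B := !![(0:R), 1; 1, 0]) ?_ ?_ <;>
  · rw [aux_mul2]
    ext i j
    fin_cases i <;> fin_cases j <;> simp [Matrix.one_apply]

lemma aux_swap_mul (a b c d : R) : !![(0:R), 1; 1, 0] * !![a, b; c, d] = !![c, d; a, b] := by
  rw [aux_mul2]; ext i j; fin_cases i <;> fin_cases j <;> simp

lemma aux_unit_swap {a b c d : R} (h : IsUnit !![a, b; c, d]) : IsUnit !![c, d; a, b] := by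
  rw [← aux_swap_mul]; exact aux_swap_unit.mul h

lemma aux_u01 (c : R) : IsUnit (!![(1:R), c; 0, 1]) := by
  refine aux_isUnit_of_mul2 (B := !![(1:R), -c; 0, 1]) ?_ ?_ <;>
  · rw [aux_mul2]
    ext i j
    fin_cases i <;> fin_cases j <;> simp [Matrix.one_apply]

lemma aux_K1 {x y : R} (h : IsUnit !![x, y; 0, 1]) : IsUnit x := by
  obtain ⟨U, hU⟩ := h
  have h1 := U.mul_inv
  have h2 := U.inv_mul
  rw [hU] at h1 h2
  set N := (Units.val U⁻¹ : Matrix (Fin 2) (Fin 2) R) with hN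
  have e10 : N 1 0 = 0 := by
    have := aux_entry_eq h1 1 0
    simpa [Matrix.mul_apply, Fin.sum_univ_two, Matrix.one_apply] using this
  have e00 : x * N 0 0 + y * N 1 0 = 1 := by
    have := aux_entry_eq h1 0 0
    simpa [Matrix.mul_apply, Fin.sum_univ_two, Matrix.one_apply] using this
  have e00' : N 0 0 * x = 1 := by
    have := aux_entry_eq h2 0 0
    simpa [Matrix.mul_apply, Fin.sum_univ_two, Matrix.one_apply] using this
  rw [e10, mul_zero, add_zero] at e00
  exact ⟨⟨x, N 0 0, e00, e00'⟩, rfl⟩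

lemma aux_K2 {x y : R} (h : IsUnit !![(1:R), 0; x, y]) : IsUnit y := by
  obtain ⟨U, hU⟩ := h
  have h1 := U.mul_inv
  have h2 := U.inv_mul
  rw [hU] at h1 h2
  set N := (Units.val U⁻¹ : Matrix (Fin 2) (Fin 2) R) with hN
  have e01 : N 0 1 = 0 := by
    have := aux_entry_eq h1 0 1
    simpa [Matrix.mul_apply, Fin.sum_univ_two, Matrix.one_apply] using this
  have e11 : x * N 0 1 + y * N 1 1 = 1 := by
    have := aux_entry_eq h1 1 1
    simpa [Matrix.mul_apply, Fin.sum_univ_two, Matrix.one_apply] using this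
  have e11' : N 1 1 * y = 1 := by
    have := aux_entry_eq h2 1 1
    simpa [Matrix.mul_apply, Fin.sum_univ_two, Matrix.one_apply] using this
  rw [e01, mul_zero, zero_add] at e11
  exact ⟨⟨y, N 1 1, e11, e11'⟩, rfl⟩

lemma aux_adm_of_unit_top {a b c d : R} (h : IsUnit !![a, b; c, d]) : Admissible a b :=
  ⟨!![a, b; c, d], h, by simp, by simp⟩

lemma aux_adm_of_unit_bot {a b c d : R} (h : IsUnit !![a, b; c, d]) : Admissible c d :=
  aux_adm_of_unit_top (aux_unit_swap h)

lemma aux_adm_right_inv {a b : R} (h : Admissible a b) :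
    ∃ s t : R, a * s + b * t = 1 := by
  obtain ⟨M, hM, ha, hb⟩ := h
  obtain ⟨U, hU⟩ := hM
  have h1 := U.mul_inv
  rw [hU] at h1
  set N := (Units.val U⁻¹ : Matrix (Fin 2) (Fin 2) R) with hN
  refine ⟨N 0 0, N 1 0, ?_⟩
  have := aux_entry_eq h1 0 0
  simpa [Matrix.mul_apply, Fin.sum_univ_two, Matrix.one_apply, ha, hb] using this

lemma aux_rep_lemma {a b c d : R} (hab : Admissible a b) (hcd : Admissible c d)
    (h : pt R a b = pt R c d) : ∃ u : R, IsUnit u ∧ c = u * a ∧ d = u * b := by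
  have h1 : (![c, d] : Fin 2 → R) ∈ pt R a b := by
    rw [h]; exact Submodule.mem_span_singleton_self _
  have h2 : (![a, b] : Fin 2 → R) ∈ pt R c d := by
    rw [← h]; exact Submodule.mem_span_singleton_self _
  obtain ⟨u, hu⟩ := Submodule.mem_span_singleton.mp h1
  obtain ⟨v, hv⟩ := Submodule.mem_span_singleton.mp h2
  have huc : c = u * a := by have := congrFun hu 0; simpa using this.symm
  have hud : d = u * b := by have := congrFun hu 1; simpa using this.symm
  have hva : a = v * c := by have := congrFun hv 0; simpa using this.symm
  have hvb : b = v * d := by have := congrFun hv 1; simpa using this.symm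
  obtain ⟨s, t, hst⟩ := aux_adm_right_inv hab
  obtain ⟨s', t', hst'⟩ := aux_adm_right_inv hcd
  have hvu : v * u = 1 := by
    have : v * u * (a * s + b * t) = a * s + b * t := by
      rw [show v * u * (a * s + b * t) = (v * (u * a)) * s + (v * (u * b)) * t by noncomm_ring,
        ← huc, ← hud, ← hva, ← hvb]
    rw [hst, mul_one] at this
    exact this
  have huv : u * v = 1 := by
    have : u * v * (c * s' + d * t') = c * s' + d * t' := by
      rw [show u * v * (c * s' + d * t') = (u * (v * c)) * s' + (u * (v * d)) * t' by noncomm_ring,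
        ← hva, ← hvb, ← huc, ← hud]
    rw [hst', mul_one] at this
    exact this
  exact ⟨u, ⟨⟨u, v, huv, hvu⟩, rfl⟩, huc, hud⟩

/-- normalization of the witnessing pairs in `Distant`. -/
lemma aux_distant_norm {x q : Submodule R (Fin 2 → R)} {a b c d : R}
    (hd : Distant x q) (hx : x = pt R a b) (hab : Admissible a b)
    (hq : q = pt R c d) (hcd : Admissible c d) : IsUnit !![a, b; c, d] := by
  obtain ⟨a', b', c', d', hx', hq', hU⟩ := hd
  have hab' : Admissible a' b' := aux_adm_of_unit_top hU
  have hcd' : Admissible c' d' := aux_adm_of_unit_bot hU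
  obtain ⟨u, hu, hua, hub⟩ := aux_rep_lemma hab' hab (by rw [← hx', ← hx])
  obtain ⟨w, hw, hwc, hwd⟩ := aux_rep_lemma hcd' hcd (by rw [← hq', ← hq])
  rw [hua, hub, hwc, hwd, ← aux_diag_mul]
  exact (aux_diag_unit hu hw).mul hU

/-! ### Transport by right multiplication with a matrix -/

def aux_rmulL (P : Matrix (Fin 2) (Fin 2) R) : (Fin 2 → R) →ₗ[R] (Fin 2 → R) where
  toFun v := v ᵥ* P
  map_add' x y := Matrix.add_vecMul _ _ _
  map_smul' r v := by
    ext j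
    simp [Matrix.vecMul, dotProduct, Fin.sum_univ_two, mul_add, mul_assoc]

@[simp] lemma aux_rmulL_apply (P : Matrix (Fin 2) (Fin 2) R) (v : Fin 2 → R) :
    aux_rmulL P v = v ᵥ* P := rfl

lemma aux_rmulL_comp {P Q : Matrix (Fin 2) (Fin 2) R} (h : Q * P = 1)
    (x : Submodule R (Fin 2 → R)) :
    Submodule.map (aux_rmulL P) (Submodule.map (aux_rmulL Q) x) = x := by
  rw [← Submodule.map_comp]
  have : (aux_rmulL P).comp (aux_rmulL Q) = LinearMap.id := by
    refine LinearMap.ext fun v => ?_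
    show (v ᵥ* Q) ᵥ* P = v
    rw [Matrix.vecMul_vecMul, h, Matrix.vecMul_one]
  rw [this, Submodule.map_id]

lemma aux_vecMul_pair (a b : R) (P : Matrix (Fin 2) (Fin 2) R) :
    (![a, b] : Fin 2 → R) ᵥ* P = ![a * P 0 0 + b * P 1 0, a * P 0 1 + b * P 1 1] := by
  funext j
  fin_cases j <;> simp [Matrix.vecMul, dotProduct, Fin.sum_univ_two]

lemma aux_map_pt (P : Matrix (Fin 2) (Fin 2) R) (a b : R) :
    Submodule.map (aux_rmulL P) (pt R a b) =
      pt R (a * P 0 0 + b * P 1 0) (a * P 0 1 + b * P 1 1) := by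
  unfold pt
  rw [Submodule.map_span, Set.image_singleton, aux_rmulL_apply, aux_vecMul_pair]

lemma aux_stack_mul (a b c d : R) (P : Matrix (Fin 2) (Fin 2) R) :
    !![a, b; c, d] * P =
      !![a * P 0 0 + b * P 1 0, a * P 0 1 + b * P 1 1;
         c * P 0 0 + d * P 1 0, c * P 0 1 + d * P 1 1] := by
  ext i j
  fin_cases i <;> fin_cases j <;> simp [Matrix.mul_apply, Fin.sum_univ_two]

lemma aux_adm_map {a b : R} (hab : Admissible a b) {P : Matrix (Fin 2) (Fin 2) R}
    (hP : IsUnit P) : Admissible (a * P 0 0 + b * P 1 0) (a * P 0 1 + b * P 1 1) := by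
  obtain ⟨M, hM, h0, h1⟩ := hab
  exact ⟨M * P, hM.mul hP,
    by simp [Matrix.mul_apply, Fin.sum_univ_two, h0, h1],
    by simp [Matrix.mul_apply, Fin.sum_univ_two, h0, h1]⟩

lemma aux_projline_map {x : Submodule R (Fin 2 → R)} (hx : x ∈ ProjLine R)
    {P : Matrix (Fin 2) (Fin 2) R} (hP : IsUnit P) :
    Submodule.map (aux_rmulL P) x ∈ ProjLine R := by
  obtain ⟨a, b, hab, hxe⟩ := hx
  exact ⟨_, _, aux_adm_map hab hP, by rw [hxe, aux_map_pt]⟩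

lemma aux_distant_map {x y : Submodule R (Fin 2 → R)} (h : Distant x y)
    {P : Matrix (Fin 2) (Fin 2) R} (hP : IsUnit P) :
    Distant (Submodule.map (aux_rmulL P) x) (Submodule.map (aux_rmulL P) y) := by
  obtain ⟨a, b, c, d, hx, hy, hU⟩ := h
  refine ⟨_, _, _, _, by rw [hx, aux_map_pt], by rw [hy, aux_map_pt], ?_⟩
  rw [← aux_stack_mul]
  exact hU.mul hP

/-! ### The core lemma, for `p = R(1,0)` -/

lemma aux_unit_t10 (t : R) : IsUnit (!![t, (1:R); 1, 0]) := by
  refine aux_isUnit_of_mul2 (B := !![(0:R), 1; 1, -t]) ?_ ?_ <;>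
  · rw [aux_mul2]
    ext i j
    fin_cases i <;> fin_cases j <;> simp [Matrix.one_apply]

lemma aux_core {R : Type*} [Ring R] (q : Submodule R (Fin 2 → R)) (hq : q ∈ ProjLine R)
    (h : ∀ x ∈ ProjLine R, Distant x (pt R 1 0) → Distant x q) :
    ∀ x ∈ ProjLine R, Distant x q → Distant x (pt R 1 0) := by
  -- `R(0,1)` is distant to `R(1,0)`, hence to `q`; so `q = R(1,e)` for some `e`
  have adm01 : Admissible (0:R) 1 := aux_adm_of_unit_top aux_swap_unit
  have h01 : pt R 0 1 ∈ ProjLine R := ⟨0, 1, adm01, rfl⟩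
  have d01 : Distant (pt R 0 1) (pt R 1 0) := ⟨0, 1, 1, 0, rfl, rfl, aux_swap_unit⟩
  obtain ⟨c, d, hcd, hq_eq⟩ := hq
  have hcd_unit : IsUnit (!![(0:R), 1; c, d]) :=
    aux_distant_norm (h _ h01 d01) rfl adm01 hq_eq hcd
  have hc : IsUnit c := aux_K1 (aux_unit_swap hcd_unit)
  set c' : R := ↑hc.unit⁻¹ with hc'
  have hcc' : c * c' = 1 := hc.mul_val_inv
  set e : R := c' * d with he
  have hq1e : q = pt R 1 e := by
    rw [hq_eq, ← aux_pt_unit_smul hc 1 e, mul_one, he, ← mul_assoc, hcc', one_mul]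
  have adm1e : Admissible (1:R) e := aux_adm_of_unit_top (aux_u01 e)
  -- key hypothesis: `1 - t*e` is a unit for every `t`
  have H : ∀ t : R, IsUnit (1 - t * e) := by
    intro t
    have admt1 : Admissible t (1:R) := aux_adm_of_unit_top (aux_unit_t10 t)
    have ht1 : pt R t 1 ∈ ProjLine R := ⟨t, 1, admt1, rfl⟩
    have dt1 : Distant (pt R t 1) (pt R 1 0) := ⟨t, 1, 1, 0, rfl, rfl, aux_unit_t10 t⟩
    have hA : IsUnit (!![t, (1:R); 1, e]) :=
      aux_distant_norm (h _ ht1 dt1) rfl admt1 hq1e adm1e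
    have hA1 : !![(1:R), -t; 0, 1] * !![t, (1:R); 1, e] = !![0, 1 - t*e; 1, e] := by
      rw [aux_mul2]
      ext i j
      fin_cases i <;> fin_cases j <;> simp <;> noncomm_ring
    have hA1u : IsUnit (!![(0:R), 1 - t*e; 1, e]) := by
      rw [← hA1]; exact (aux_u01 (-t)).mul hA
    have hA2u : IsUnit (!![(1:R), e; 0, 1 - t*e]) := by
      rw [← aux_swap_mul]; exact aux_swap_unit.mul hA1u
    have hA3 : !![(1:R), e; 0, 1 - t*e] * !![(1:R), -e; 0, 1] = !![(1:R), 0; 0, 1 - t*e] := by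
      rw [aux_mul2]
      ext i j
      fin_cases i <;> fin_cases j <;> simp
    have hA3u : IsUnit (!![(1:R), 0; 0, 1 - t*e]) := by
      rw [← hA3]; exact hA2u.mul (aux_u01 (-e))
    exact aux_K2 hA3u
  -- now take any `x` distant to `q` and show it is distant to `p = R(1,0)`
  intro x hx hxq
  have hxqc := hxq
  obtain ⟨a', b', c', d', hx_eq, hq_eq', hU⟩ := hxq
  have hab' : Admissible a' b' := aux_adm_of_unit_top hU
  have hA : IsUnit (!![a', b'; 1, e]) := aux_distant_norm hxqc hx_eq hab' hq1e adm1e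
  -- `B = !![a', b' - a'*e; 1, 0]` is a unit
  have hBeq : !![a', b'; 1, e] * !![(1:R), -e; 0, 1] = !![a', b' - a'*e; 1, 0] := by
    rw [aux_mul2]
    ext i j
    fin_cases i <;> fin_cases j <;> simp <;> noncomm_ring
  set B : Matrix (Fin 2) (Fin 2) R := !![a', b' - a'*e; 1, 0] with hB
  have hBu : IsUnit B := by rw [← hBeq]; exact hA.mul (aux_u01 (-e))
  obtain ⟨V, hV⟩ := hBu
  have hB1 := V.mul_inv
  rw [hV] at hB1
  set B' := (Units.val V⁻¹ : Matrix (Fin 2) (Fin 2) R) with hB'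
  set E : Matrix (Fin 2) (Fin 2) R := !![0, a' * e; 0, 0] with hE
  -- `G = 1 + B' * E` is a unit thanks to `H`
  set G : Matrix (Fin 2) (Fin 2) R := 1 + B' * E with hG
  have hGu : IsUnit G := by
    have hG_eq : G = !![(1:R), 0; 0, 1 - (-(B' 1 0 * a')) * e] *
        !![(1:R), B' 0 0 * (a' * e); 0, 1] := by
      rw [hG, aux_mul2]
      ext i j
      fin_cases i <;> fin_cases j <;>
        simp [hE, Matrix.mul_apply, Fin.sum_univ_two, Matrix.one_apply] <;> noncomm_ring
    rw [hG_eq]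
    exact (aux_diag_unit isUnit_one (H (-(B' 1 0 * a')))).mul (aux_u01 _)
  -- `B * G = !![a', b'; 1, 0]`
  have hBG : B * G = !![a', b'; 1, 0] := by
    rw [hG, mul_add, mul_one, ← mul_assoc, hB1, one_mul, hB, hE]
    ext i j
    fin_cases i <;> fin_cases j <;> simp
  have hTu : IsUnit (!![a', b'; 1, 0]) := by
    rw [← hBG]; exact (hV ▸ V.isUnit).mul hGu
  exact ⟨a', b', 1, 0, hx_eq, rfl, hTu⟩

end Aux

/-- The neighbourhood of a point in the distant graph cannot be a proper subset of the
neighbourhood of another point: if every point distant to `p` is distant to `q`, then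
every point distant to `q` is distant to `p`. -/
theorem neighbourhood_not_proper_subset (R : Type*) [Ring R] [Nontrivial R]
    (p : Submodule R (Fin 2 → R)) (hp : p ∈ ProjLine R)
    (q : Submodule R (Fin 2 → R)) (hq : q ∈ ProjLine R)
    (h : ∀ x ∈ ProjLine R, Distant x p → Distant x q) :
    ∀ x ∈ ProjLine R, Distant x q → Distant x p := by
  obtain ⟨a, b, hab, hp_eq⟩ := hp
  obtain ⟨M, hM, hM00, hM01⟩ := hab
  obtain ⟨U, hU⟩ := hM
  set Mi := (Units.val U⁻¹ : Matrix (Fin 2) (Fin 2) R) with hMi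
  have hMMi : M * Mi = 1 := by rw [hMi, ← hU]; exact U.mul_inv
  have hMiM : Mi * M = 1 := by rw [hMi, ← hU]; exact U.inv_mul
  have hM_unit : IsUnit M := ⟨U, hU⟩
  have hMi_unit : IsUnit Mi := ⟨U⁻¹, rfl⟩
  -- transported versions
  have hΦp : Submodule.map (aux_rmulL Mi) p = pt R 1 0 := by
    rw [hp_eq, aux_map_pt]
    have h1 : a * Mi 0 0 + b * Mi 1 0 = 1 := by
      have := aux_entry_eq hMMi 0 0
      simpa [Matrix.mul_apply, Fin.sum_univ_two, Matrix.one_apply, hM00, hM01] using this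
    have h2 : a * Mi 0 1 + b * Mi 1 1 = 0 := by
      have := aux_entry_eq hMMi 0 1
      simpa [Matrix.mul_apply, Fin.sum_univ_two, Matrix.one_apply, hM00, hM01] using this
    rw [h1, h2]
  have hΨ10 : Submodule.map (aux_rmulL M) (pt R 1 0) = p := by
    rw [← hΦp, aux_rmulL_comp hMiM]
  have hq0 : Submodule.map (aux_rmulL Mi) q ∈ ProjLine R := aux_projline_map hq hMi_unit
  have h0 : ∀ x ∈ ProjLine R, Distant x (pt R 1 0) →
      Distant x (Submodule.map (aux_rmulL Mi) q) := by
    intro x hx hd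
    have hx' : Submodule.map (aux_rmulL M) x ∈ ProjLine R := aux_projline_map hx hM_unit
    have hd' : Distant (Submodule.map (aux_rmulL M) x) p := by
      have := aux_distant_map hd hM_unit
      rwa [hΨ10] at this
    have := aux_distant_map (h _ hx' hd') hMi_unit
    rwa [aux_rmulL_comp hMMi] at this
  have hcore := aux_core (Submodule.map (aux_rmulL Mi) q) hq0 h0
  intro x hx hxq
  have d1 : Distant (Submodule.map (aux_rmulL Mi) x) (Submodule.map (aux_rmulL Mi) q) :=
    aux_distant_map hxq hMi_unit
  have hx0 : Submodule.map (aux_rmulL Mi) x ∈ ProjLine R := aux_projline_map hx hMi_unit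
  have d2 := hcore _ hx0 d1
  have d3 := aux_distant_map d2 hM_unit
  rwa [aux_rmulL_comp hMiM, hΨ10] at d3
end

section
/- Let R be a K-algebra over a field K with more than 2 elements, and let b ∈ rad R be nonzero. Then the map β' : R → R, z ↦ (1 − zb)⁻¹ z (well-defined since 1 − zb is a unit for all z) is bijective but not a K-affine transformation: there exists k ∈ K \ {0,1} such that 0, (1−b)⁻¹, and (1−kb)⁻¹ k are not collinear in the K-vector space R, because 1−b and 1−kb are K-linearly independent. -/
section JacHelpers
variable {R : Type*} [Ring R]

/-- Any element of the form `1 + c` with `c` in the Jacobson radical is a unit. -/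
lemma jac_isUnit_one_add {c : R} (hc : c ∈ (⊥ : Ideal R).jacobson) : IsUnit (1 + c) := by
  have key : ∀ x : R, x ∈ (⊥ : Ideal R).jacobson → ∃ w : R, w * (1 + x) = 1 := by
    intro x hx
    obtain ⟨z, hz⟩ := Ideal.mem_jacobson_iff.1 hx 1
    rw [Ideal.mem_bot, sub_eq_zero] at hz
    rw [mul_one] at hz
    exact ⟨z, by rw [mul_add, mul_one, add_comm]; exact hz⟩
  obtain ⟨w, hw⟩ := key c hc
  have hmem : -(w * c) ∈ (⊥ : Ideal R).jacobson :=
    neg_mem (Ideal.mul_mem_left _ w hc)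
  obtain ⟨v, hv⟩ := key _ hmem
  have hw' : (1 : R) + -(w * c) = w := by
    rw [mul_add, mul_one] at hw; rw [← hw]; abel
  rw [hw'] at hv
  have hvc : v = 1 + c := by
    calc v = v * (w * (1 + c)) := by rw [hw, mul_one]
    _ = (v * w) * (1 + c) := by rw [mul_assoc]
    _ = 1 + c := by rw [hv, one_mul]
  exact ⟨⟨1 + c, w, by rw [← hvc]; exact hv, hw⟩, rfl⟩

/-- `1 - z * b` is a unit for any `z` when `b` lies in the Jacobson radical. -/
lemma jac_isUnit_one_sub {b : R} (hb : b ∈ (⊥ : Ideal R).jacobson) (z : R) :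
    IsUnit (1 - z * b) := by
  have : -(z * b) ∈ (⊥ : Ideal R).jacobson := neg_mem (Ideal.mul_mem_left _ z hb)
  simpa [sub_eq_add_neg] using jac_isUnit_one_add this

/-- The key computation showing `z ↦ (1 - z(-b))⁻¹ z` inverts `z ↦ (1 - zb)⁻¹ z`. -/
lemma jac_beta_inv {b : R} (hb : b ∈ (⊥ : Ideal R).jacobson) (z : R) :
    Ring.inverse (1 - (Ring.inverse (1 - z * b) * z) * (-b)) *
      (Ring.inverse (1 - z * b) * z) = z := by
  obtain ⟨u, hu⟩ := jac_isUnit_one_sub hb z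
  have e1 : Ring.inverse (1 - z * b) = (↑u⁻¹ : R) := by rw [← hu, Ring.inverse_unit]
  have huinv : (↑u⁻¹ : R) * (1 - z * b) = 1 := by rw [← hu]; exact u.inv_mul
  have h1 : (1 : R) - ((↑u⁻¹ : R) * z) * (-b) = ↑u⁻¹ := by
    calc (1:R) - ((↑u⁻¹ : R) * z) * (-b) = 1 + (↑u⁻¹ : R) * (z * b) := by noncomm_ring
    _ = (↑u⁻¹ : R) * (1 - z * b) + (↑u⁻¹ : R) * (z * b) := by rw [huinv]
    _ = ↑u⁻¹ := by noncomm_ring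
  rw [e1, h1, Ring.inverse_unit u⁻¹, inv_inv]
  exact u.mul_inv_cancel_left z

end JacHelpers

section FieldHelpers
variable {K : Type*} [Field K] {R : Type*} [Ring R] [Nontrivial R] [Algebra K R]

lemma jac_not_isUnit {b : R} (hb : b ∈ (⊥ : Ideal R).jacobson) : ¬ IsUnit b := by
  rintro ⟨u, rfl⟩
  have h := jac_isUnit_one_sub hb (↑u⁻¹ : R)
  rw [u.inv_mul, sub_self] at h
  exact one_ne_zero (h.mul_right_cancel (by simp))

lemma jac_linind {b : R} (hb : b ∈ (⊥ : Ideal R).jacobson) (hb0 : b ≠ 0) {k : K} (hk1 : k ≠ 1) :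
    LinearIndependent K ![1 - b, 1 - algebraMap K R k * b] := by
  rw [LinearIndependent.pair_iff]
  intro s t hst
  rw [Algebra.smul_def, Algebra.smul_def] at hst
  have hexp : algebraMap K R (s + t) = algebraMap K R (s + t * k) * b := by
    rw [map_add, map_add, map_mul]
    linear_combination (norm := noncomm_ring) hst
  by_cases hc : s + t * k = 0
  · rw [hc, map_zero, zero_mul] at hexp
    have hst0 : s + t = 0 := by
      have : Function.Injective (algebraMap K R) := RingHom.injective _
      exact this (by rw [hexp, map_zero])
    have ht : t = 0 := by
      have h1 : t * (k - 1) = 0 := by linear_combination hc - hst0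
      rcases mul_eq_zero.mp h1 with h | h
      · exact h
      · exact absurd (by linear_combination h) hk1
    exact ⟨by linear_combination hst0 - ht, ht⟩
  · exfalso
    have hbe : b = algebraMap K R ((s + t * k)⁻¹ * (s + t)) := by
      have h2 : algebraMap K R ((s + t * k)⁻¹) * (algebraMap K R (s + t * k) * b)
          = algebraMap K R ((s + t * k)⁻¹) * algebraMap K R (s + t) := by rw [hexp]
      rw [← mul_assoc, ← map_mul, inv_mul_cancel₀ hc, map_one, one_mul, ← map_mul] at h2
      exact h2.symm ▸ h2
    rcases eq_or_ne ((s + t * k)⁻¹ * (s + t)) 0 with h | h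
    · exact hb0 (by rw [hbe, h, map_zero])
    · exact jac_not_isUnit hb (hbe ▸ (h.isUnit.map (algebraMap K R)))

lemma jac_key_not_smul {b : R} (hb : b ∈ (⊥ : Ideal R).jacobson) (hb0 : b ≠ 0)
    {k : K} (hk0 : k ≠ 0) (hk1 : k ≠ 1) (s : K) :
    Ring.inverse (1 - algebraMap K R k * b) * algebraMap K R k ≠ s • Ring.inverse (1 - b) := by
  intro h
  have hu1 : IsUnit ((1 : R) - b) := by simpa using jac_isUnit_one_sub hb 1
  have huk : IsUnit ((1 : R) - algebraMap K R k * b) := jac_isUnit_one_sub hb _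
  have h2 := congrArg
    (fun x => ((1 : R) - algebraMap K R k * b) * x * (1 - b)) h
  rw [Ring.mul_inverse_cancel_left _ _ huk] at h2
  rw [mul_smul_comm, smul_mul_assoc, mul_assoc, Ring.inverse_mul_cancel _ hu1, mul_one] at h2
  have h3 : k • ((1:R) - b) + (-s) • ((1:R) - algebraMap K R k * b) = 0 := by
    rw [Algebra.smul_def, h2, neg_smul, add_neg_cancel]
  obtain ⟨hk, _⟩ := LinearIndependent.pair_iff.mp (jac_linind hb hb0 hk1) k (-s) h3
  exact hk0 hk

lemma field_exists_k (hK : 2 < Cardinal.mk K) : ∃ k : K, k ≠ 0 ∧ k ≠ 1 := by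
  by_contra h
  push_neg at h
  have hsub : (Set.univ : Set K) ⊆ ({0, 1} : Set K) := by
    intro k _
    rcases eq_or_ne k 0 with h0 | h0
    · exact Or.inl h0
    · exact Or.inr (h k h0)
  have h2 : Cardinal.mk K ≤ 2 := by
    calc Cardinal.mk K = Cardinal.mk (Set.univ : Set K) := Cardinal.mk_univ.symm
    _ ≤ Cardinal.mk (({0, 1} : Set K) : Set K) := Cardinal.mk_le_mk_of_subset hsub
    _ ≤ Cardinal.mk (({1} : Set K) : Set K) + 1 := Cardinal.mk_insert_le
    _ ≤ 2 := by rw [Cardinal.mk_singleton]; norm_num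
  exact absurd h2 (not_le.mpr hK)

end FieldHelpers

/-- Let `R` be an algebra over a field `K` with more than two elements (`K` lying in the
centre of `R`, `K ≠ R`), and let `b ∈ rad R` be nonzero. Then the map
`β' : R → R, z ↦ (1 - zb)⁻¹ z` (well defined since `1 - zb` is a unit for all `z`,
the inverse being realized by `Ring.inverse`) is bijective but not a `K`-affine
transformation: there is `k ∈ K \ {0,1}` such that the three image points
`0`, `(1-b)⁻¹`, `(1-kb)⁻¹k` of `0, 1, k ∈ K` are not collinear over `K`, because
`1 - b` and `1 - kb` are `K`-linearly independent. -/
theorem nonaffine_bijection (K : Type*) [Field K] (R : Type*) [Ring R] [Nontrivial R]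
    [Algebra K R] (hKR : ¬ Function.Surjective (algebraMap K R))
    (hK : 2 < Cardinal.mk K)
    (b : R) (hb : b ∈ (⊥ : Ideal R).jacobson) (hb0 : b ≠ 0) :
    Function.Bijective (fun z : R => Ring.inverse (1 - z * b) * z) ∧
      ¬ (∃ (f : R →ₗ[K] R) (v : R), ∀ z : R,
          Ring.inverse (1 - z * b) * z = f z + v) ∧
      ∃ k : K, k ≠ 0 ∧ k ≠ 1 ∧
        LinearIndependent K ![1 - b, 1 - algebraMap K R k * b] ∧
        ¬ Collinear K ({0, Ring.inverse (1 - b),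
            Ring.inverse (1 - algebraMap K R k * b) * algebraMap K R k} : Set R) := by
  obtain ⟨k, hk0, hk1⟩ := field_exists_k (K := K) hK
  refine ⟨?_, ?_, k, hk0, hk1, jac_linind hb hb0 hk1, ?_⟩
  · -- bijectivity
    refine Function.bijective_iff_has_inverse.mpr
      ⟨fun z => Ring.inverse (1 - z * (-b)) * z, ?_, ?_⟩
    · intro z
      exact jac_beta_inv hb z
    · intro z
      have := jac_beta_inv (neg_mem hb) z
      simpa using this
  · -- not affine
    rintro ⟨f, v, hf⟩
    have hv : v = 0 := by simpa using (hf 0).symm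
    have h1 : f 1 = Ring.inverse ((1:R) - b) := by
      have := hf 1
      rw [hv, add_zero, one_mul, mul_one] at this
      exact this.symm
    have hfk := hf (algebraMap K R k)
    rw [hv, add_zero] at hfk
    have hsm : f (algebraMap K R k) = k • f 1 := by
      rw [Algebra.algebraMap_eq_smul_one, map_smul]
    rw [hsm, h1] at hfk
    exact jac_key_not_smul hb hb0 hk0 hk1 k hfk
  · -- not collinear
    intro hcol
    have h0 : (0:R) ∈ ({0, Ring.inverse (1 - b),
        Ring.inverse (1 - algebraMap K R k * b) * algebraMap K R k} : Set R) :=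
      Set.mem_insert _ _
    rw [collinear_iff_of_mem h0] at hcol
    obtain ⟨v, hv⟩ := hcol
    obtain ⟨r₁, hr₁⟩ := hv (Ring.inverse (1 - b)) (by simp)
    obtain ⟨r₂, hr₂⟩ := hv (Ring.inverse (1 - algebraMap K R k * b) * algebraMap K R k)
      (by simp)
    rw [vadd_eq_add, add_zero] at hr₁ hr₂
    have hu1 : IsUnit ((1:R) - b) := by simpa using jac_isUnit_one_sub hb 1
    have hp0 : Ring.inverse ((1:R) - b) ≠ 0 := by
      intro h
      have hmul := Ring.mul_inverse_cancel _ hu1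
      rw [h, mul_zero] at hmul
      exact one_ne_zero hmul.symm
    have hr10 : r₁ ≠ 0 := by
      rintro rfl
      rw [zero_smul] at hr₁
      exact hp0 hr₁
    have hq : Ring.inverse (1 - algebraMap K R k * b) * algebraMap K R k
        = (r₂ * r₁⁻¹) • Ring.inverse ((1:R) - b) := by
      rw [hr₂, hr₁, smul_smul]
      congr 1
      field_simp
    exact jac_key_not_smul hb hb0 hk0 hk1 (r₂ * r₁⁻¹) hq
end
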